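/- In the unbiased Bernoulli trie model, let Ψ(t,z) = ∑_{j=1}^∞ j·E[e^{tδ_j}]·z^j/j!. Then for every real t with t < ln 2 at which all E[e^{tδ_j}] are finite (in particular for all |t| < ln 2) and every real z ≥ 0: e^{−z}·Ψ(t,z) − z = −(1 − e^t)·z·∑_{k=0}^∞ e^{tk}·(1 − e^{−z/2^k}), the series on the right converging absolutely. -/

import Mathlib

open MeasureTheory ProbabilityTheory Filter
open scoped ENNReal NNReal Topology

noncomputable section

/-- The length of the longest common prefix of two infinite binary strings. -/
def lcp (x y : ℕ → Bool) : ℕ := sSup {m : ℕ | ∀ k < m, x k = y k}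

/-- The depth of key `i` in the trie built on the keys `X 0, …, X (n-1)`. -/
def trieDepth (X : ℕ → ℕ → Bool) (n i : ℕ) : ℕ :=
  1 + ((Finset.range n).erase i).sup fun j => lcp (X i) (X j)

/-- The distance between the (distinct) keys `i` and `j` in the trie on `n` keys. -/
def trieDist (X : ℕ → ℕ → Bool) (n i j : ℕ) : ℕ :=
  trieDepth X n i + trieDepth X n j - 2 * lcp (X i) (X j)

/-- The unbiased Bernoulli trie model: the keys `X 0, X 1, …` are i.i.d. random infinite
binary strings whose bits are i.i.d. uniform on `{0,1}`. -/
structure TrieModel {Ω : Type*} [MeasurableSpace Ω] (P : Measure Ω)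
    (X : ℕ → Ω → ℕ → Bool) : Prop where
  prob : IsProbabilityMeasure P
  measBit : ∀ i k, Measurable fun ω => X i ω k
  indepBits : iIndepFun
      (fun (p : ℕ × ℕ) ω => X p.1 ω p.2) P
  fairBits : ∀ i k, P {ω | X i ω k = true} = 1 / 2

/-- `δ n` is distributed as the depth `d_I(n)` of a uniformly random key `I` among the `n`
keys, chosen independently of the keys (with `δ 1 = 0` for a single key). -/
def IsTrieDepthRV {Ω : Type*} [MeasurableSpace Ω] (P : Measure Ω)
    (X : ℕ → Ω → ℕ → Bool) (δ : ℕ → Ω → ℕ) : Prop :=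
  (∀ n, Measurable (δ n)) ∧
  P {ω | δ 1 ω = 0} = 1 ∧
  ∀ n, 2 ≤ n → ∀ m : ℕ,
    P {ω | δ n ω = m} =
      (n : ℝ≥0∞)⁻¹ *
        ∑ i ∈ Finset.range n, P {ω | trieDepth (fun k => X k ω) n i = m}

lemma lcp_lt_iff {x y : ℕ → Bool} (h : ∃ k, x k ≠ y k) {m : ℕ} :
    lcp x y < m ↔ ∃ k < m, x k ≠ y k := by
  classical
  set d := Nat.find h with hd
  have hset : {m : ℕ | ∀ k < m, x k = y k} = Set.Iic d := by
    ext a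
    simp only [Set.mem_setOf_eq, Set.mem_Iic]
    constructor
    · intro ha
      by_contra hlt
      push_neg at hlt
      exact Nat.find_spec h (ha d hlt)
    · intro ha k hk
      by_contra hne
      exact absurd (Nat.find_min' h hne) (Nat.not_le.mpr (lt_of_lt_of_le hk ha))
  have hval : lcp x y = d := by rw [lcp, hset, csSup_Iic]
  rw [hval]
  constructor
  · intro hdm
    exact ⟨d, hdm, Nat.find_spec h⟩
  · rintro ⟨k, hk, hne⟩
    exact lt_of_le_of_lt (Nat.find_min' h hne) hk

lemma one_sub_pow_le' {a : ℝ} (h0 : 0 ≤ a) (h1 : a ≤ 1) (k : ℕ) :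
    1 - a ^ k ≤ k * (1 - a) := by
  induction k with
  | zero => simp
  | succ k ih =>
    have hak : a ^ k ≤ 1 := pow_le_one₀ h0 h1
    have hnn : 0 ≤ a ^ k := pow_nonneg h0 k
    have hh : 1 - a ^ (k+1) = (1 - a) + a * (1 - a ^ k) := by ring
    push_cast
    nlinarith [mul_le_mul_of_nonneg_left ih h0, mul_le_one₀ h1 (by linarith : (0:ℝ) ≤ 1 - a ^ k) (by linarith)]

lemma count_pred {n m : ℕ} (i0 : Fin n) :
    Fintype.card {f : Fin n → Fin m → Bool // ∀ j, j ≠ i0 → f j ≠ f i0}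
      = 2 ^ m * (2 ^ m - 1) ^ (n - 1) := by
  classical
  have hcard_ne : ∀ (v : Fin m → Bool),
      Fintype.card {w : Fin m → Bool // w ≠ v} = 2 ^ m - 1 := by
    intro v
    have h1 : Fintype.card {w : Fin m → Bool // w = v} = 1 := Fintype.card_subtype_eq v
    have := Fintype.card_subtype_compl (fun w : Fin m → Bool => w = v)
    rw [h1] at this
    simpa [Fintype.card_fun] using this
  have hcard_j : Fintype.card {j : Fin n // j ≠ i0} = n - 1 := by
    have h1 : Fintype.card {j : Fin n // j = i0} = 1 := Fintype.card_subtype_eq i0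
    have := Fintype.card_subtype_compl (fun j : Fin n => j = i0)
    rw [h1] at this
    simpa using this
  -- fiberwise count
  rw [Fintype.card_subtype]
  rw [Finset.card_eq_sum_card_fiberwise
    (f := fun f : Fin n → Fin m → Bool => f i0) (t := Finset.univ)
    (fun f _ => Finset.mem_univ _)]
  have hfiber : ∀ v : Fin m → Bool,
      ((Finset.univ.filter fun f : Fin n → Fin m → Bool => ∀ j, j ≠ i0 → f j ≠ f i0).filter
        (fun f => f i0 = v)).card = (2 ^ m - 1) ^ (n - 1) := by
    intro v
    have hset : ((Finset.univ.filter fun f : Fin n → Fin m → Bool => ∀ j, j ≠ i0 → f j ≠ f i0).filter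
        (fun f => f i0 = v))
        = Finset.univ.filter (fun f : Fin n → Fin m → Bool => f i0 = v ∧ ∀ j, j ≠ i0 → f j ≠ v) := by
      ext f
      simp only [Finset.mem_filter, Finset.mem_univ, true_and]
      constructor
      · rintro ⟨h1, h2⟩
        exact ⟨h2, fun j hj => h2 ▸ h1 j hj⟩
      · rintro ⟨h1, h2⟩
        exact ⟨fun j hj => h1 ▸ h2 j hj, h1⟩
    rw [hset, ← Fintype.card_subtype]
    have e2 : {f : Fin n → Fin m → Bool // f i0 = v ∧ ∀ j, j ≠ i0 → f j ≠ v}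
        ≃ ({j : Fin n // j ≠ i0} → {w : Fin m → Bool // w ≠ v}) :=
      { toFun := fun f j => ⟨f.1 j.1, f.2.2 j.1 j.2⟩
        invFun := fun g =>
          ⟨fun j => if h : j = i0 then v else (g ⟨j, h⟩).1,
            ⟨dif_pos rfl, fun j hj => by simp only [dif_neg hj]; exact (g ⟨j, hj⟩).2⟩⟩
        left_inv := by
          rintro ⟨f, hf1, hf2⟩
          ext j k
          by_cases h : j = i0
          · subst h; simp [hf1]
          · simp [dif_neg h]
        right_inv := by
          intro g
          funext j
          ext k
          simp [dif_neg j.2] }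
    rw [Fintype.card_congr e2, Fintype.card_fun, hcard_ne, hcard_j]
  rw [Finset.sum_congr rfl (fun v _ => hfiber v)]
  simp [Fintype.card_fun, mul_comm]

section Meas

variable {Ω : Type*} [MeasurableSpace Ω] {P : Measure Ω} {X : ℕ → Ω → ℕ → Bool}

lemma bit_measurable (hX : TrieModel P X) (i k : ℕ) (b : Bool) :
    MeasurableSet {ω | X i ω k = b} :=
  (hX.measBit i k) (measurableSet_singleton b)

lemma bit_prob (hX : TrieModel P X) (i k : ℕ) (b : Bool) :
    P {ω | X i ω k = b} = 2⁻¹ := by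
  have := hX.prob
  cases b
  · have hfalse : {ω | X i ω k = false} = {ω | X i ω k = true}ᶜ := by
      ext ω; simp
    rw [hfalse, measure_compl (bit_measurable hX i k true) (measure_ne_top _ _),
      hX.fairBits i k, measure_univ]
    rw [ENNReal.sub_half ENNReal.one_ne_top, one_div]
  · rw [hX.fairBits i k, one_div]

lemma meas_atom (hX : TrieModel P X) (S : Finset (ℕ × ℕ)) (g : ℕ × ℕ → Bool) :
    P {ω | ∀ p ∈ S, X p.1 ω p.2 = g p} = 2⁻¹ ^ S.card := by
  have key := hX.indepBits.measure_inter_preimage_eq_mul S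
    (sets := fun p => {g p}) (fun p _ => measurableSet_singleton _)
  have hset : {ω | ∀ p ∈ S, X p.1 ω p.2 = g p}
      = ⋂ p ∈ S, (fun ω => X p.1 ω p.2) ⁻¹' {g p} := by
    ext ω; simp [Set.mem_iInter]
  rw [hset, key]
  have : ∀ p ∈ S, P ((fun ω => X p.1 ω p.2) ⁻¹' {g p}) = 2⁻¹ := by
    intro p _
    have : (fun ω => X p.1 ω p.2) ⁻¹' {g p} = {ω | X p.1 ω p.2 = g p} := by
      ext ω; simp
    rw [this, bit_prob hX]
  rw [Finset.prod_congr rfl this, Finset.prod_const]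

lemma agree_null (hX : TrieModel P X) {i j : ℕ} (hij : i ≠ j) :
    P {ω | ∀ k, X i ω k = X j ω k} = 0 := by
  classical
  have := hX.prob
  have hbound : ∀ K : ℕ, P {ω | ∀ k, X i ω k = X j ω k} ≤ 2⁻¹ ^ K := by
    intro K
    have hsub : {ω | ∀ k, X i ω k = X j ω k}
        ⊆ ⋃ v ∈ (Finset.univ : Finset (Fin K → Bool)),
            {ω | ∀ p ∈ ({i, j} : Finset ℕ) ×ˢ Finset.range K,
              X p.1 ω p.2 = (fun q : ℕ × ℕ =>
                if h : q.2 < K then v ⟨q.2, h⟩ else false) p} := by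
      intro ω hω
      refine Set.mem_biUnion (Finset.mem_univ (fun k : Fin K => X i ω k.1)) ?_
      intro p hp
      rw [Finset.mem_product, Finset.mem_insert, Finset.mem_singleton, Finset.mem_range] at hp
      simp only [dif_pos hp.2]
      rcases hp.1 with h1 | h1 <;> subst h1
      · rfl
      · exact (hω p.2).symm
    refine le_trans (measure_mono hsub) ?_
    refine le_trans (measure_biUnion_finset_le _ _) (le_of_eq ?_)
    have hcard : (({i, j} : Finset ℕ) ×ˢ Finset.range K).card = 2 * K := by
      rw [Finset.card_product, Finset.card_range,
        Finset.card_insert_of_notMem (by simpa using hij), Finset.card_singleton]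
    have heach : ∀ v : Fin K → Bool,
        P {ω | ∀ p ∈ ({i, j} : Finset ℕ) ×ˢ Finset.range K,
          X p.1 ω p.2 = (fun q : ℕ × ℕ =>
            if h : q.2 < K then v ⟨q.2, h⟩ else false) p} = 2⁻¹ ^ (2 * K) := by
      intro v
      rw [meas_atom hX, hcard]
    calc ∑ v : Fin K → Bool, P {ω | ∀ p ∈ ({i, j} : Finset ℕ) ×ˢ Finset.range K,
          X p.1 ω p.2 = (fun q : ℕ × ℕ =>
            if h : q.2 < K then v ⟨q.2, h⟩ else false) p}
        = ∑ _v : Fin K → Bool, (2⁻¹ : ℝ≥0∞) ^ (2 * K) := Finset.sum_congr rfl fun v _ => heach v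
      _ = (2 : ℝ≥0∞) ^ K * 2⁻¹ ^ (2 * K) := by
          rw [Finset.sum_const, Finset.card_univ, Fintype.card_fun]
          simp [nsmul_eq_mul]
      _ = 2⁻¹ ^ K := by
          rw [two_mul, pow_add, ← mul_assoc, ← mul_pow,
            ENNReal.mul_inv_cancel (by norm_num) (by norm_num), one_pow, one_mul]
  have htend : Tendsto (fun K : ℕ => (2⁻¹ : ℝ≥0∞) ^ K) atTop (𝓝 0) :=
    ENNReal.tendsto_pow_atTop_nhds_zero_of_lt_one
      (by rw [ENNReal.inv_lt_one]; exact ENNReal.one_lt_two)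
  have : P {ω | ∀ k, X i ω k = X j ω k} ≤ 0 :=
    le_of_tendsto_of_tendsto' tendsto_const_nhds htend hbound
  exact le_antisymm this zero_le

end Meas
section Eset

variable {Ω : Type*} [MeasurableSpace Ω] {P : Measure Ω} {X : ℕ → Ω → ℕ → Bool}

/-- The event that key `i`'s `m`-bit prefix differs from every other key's. -/
def Eset (X : ℕ → Ω → ℕ → Bool) (n i m : ℕ) : Set Ω :=
  {ω | ∀ j ∈ (Finset.range n).erase i, ∃ k < m, X i ω k ≠ X j ω k}

lemma meas_Eset (hX : TrieModel P X) {n : ℕ} (hn : 2 ≤ n) {i : ℕ} (hi : i < n) (m : ℕ) :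
    P (Eset X n i m) = ENNReal.ofReal ((1 - (2 : ℝ)⁻¹ ^ m) ^ (n - 1)) := by
  classical
  set i0 : Fin n := ⟨i, hi⟩ with hi0
  set pat : Ω → (Fin n → Fin m → Bool) := fun ω j k => X j.1 ω k.1 with hpat
  set pred : (Fin n → Fin m → Bool) → Prop := fun f => ∀ j, j ≠ i0 → f j ≠ f i0 with hpred
  -- rewrite the event via patterns
  have hev : Eset X n i m = {ω | pred (pat ω)} := by
    ext ω
    simp only [Eset, Set.mem_setOf_eq, hpred]
    constructor
    · intro h j hj
      obtain ⟨k, hk, hne⟩ := h j.1 (Finset.mem_erase.mpr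
        ⟨fun hh => hj (Fin.ext hh), Finset.mem_range.mpr j.2⟩)
      intro heq
      exact hne (congrFun heq ⟨k, hk⟩).symm
    · intro h j hj
      rw [Finset.mem_erase, Finset.mem_range] at hj
      have hne := h ⟨j, hj.2⟩ (fun hh => hj.1 (congrArg Fin.val hh))
      obtain ⟨k, hk⟩ := Function.ne_iff.mp hne
      exact ⟨k.1, k.2, fun hh => hk hh.symm⟩
  -- atoms
  have hatom : ∀ f : Fin n → Fin m → Bool,
      {ω | pat ω = f} = {ω | ∀ p ∈ (Finset.range n) ×ˢ (Finset.range m),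
        X p.1 ω p.2 = (fun q : ℕ × ℕ =>
          if h : q.1 < n ∧ q.2 < m then f ⟨q.1, h.1⟩ ⟨q.2, h.2⟩ else false) p} := by
    intro f
    ext ω
    simp only [Set.mem_setOf_eq]
    constructor
    · intro h p hp
      rw [Finset.mem_product, Finset.mem_range, Finset.mem_range] at hp
      rw [dif_pos hp]
      exact congrFun (congrFun h ⟨p.1, hp.1⟩) ⟨p.2, hp.2⟩
    · intro h
      funext j k
      have := h (j.1, k.1) (Finset.mem_product.mpr
        ⟨Finset.mem_range.mpr j.2, Finset.mem_range.mpr k.2⟩)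
      simpa [dif_pos (And.intro j.2 k.2)] using this
  have hatom_meas : ∀ f : Fin n → Fin m → Bool, MeasurableSet {ω | pat ω = f} := by
    intro f
    rw [hatom f]
    have : {ω | ∀ p ∈ (Finset.range n) ×ˢ (Finset.range m),
        X p.1 ω p.2 = (fun q : ℕ × ℕ =>
          if h : q.1 < n ∧ q.2 < m then f ⟨q.1, h.1⟩ ⟨q.2, h.2⟩ else false) p}
        = ⋂ p ∈ (Finset.range n) ×ˢ (Finset.range m),
          {ω | X p.1 ω p.2 = (fun q : ℕ × ℕ =>
            if h : q.1 < n ∧ q.2 < m then f ⟨q.1, h.1⟩ ⟨q.2, h.2⟩ else false) p} := by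
      ext ω; simp
    rw [this]
    exact Finset.measurableSet_biInter _ (fun p _ => bit_measurable hX p.1 p.2 _)
  have hatom_prob : ∀ f : Fin n → Fin m → Bool,
      P {ω | pat ω = f} = 2⁻¹ ^ (n * m) := by
    intro f
    rw [hatom f, meas_atom hX, Finset.card_product, Finset.card_range, Finset.card_range]
  -- decomposition
  set F : Finset (Fin n → Fin m → Bool) := Finset.univ.filter pred with hF
  have hunion : {ω | pred (pat ω)} = ⋃ f ∈ F, {ω | pat ω = f} := by
    ext ω
    simp only [Set.mem_setOf_eq, Set.mem_iUnion, hF, Finset.mem_filter, Finset.mem_univ,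
      true_and, exists_prop]
    constructor
    · intro h
      exact ⟨pat ω, h, rfl⟩
    · rintro ⟨f, hf, hfe⟩
      rw [hfe]; exact hf
  have hdisj : (F : Set (Fin n → Fin m → Bool)).PairwiseDisjoint
      (fun f => {ω | pat ω = f}) := by
    intro f _ g _ hfg
    refine Set.disjoint_left.mpr ?_
    intro ω hf hg
    exact hfg (hf.symm.trans hg)
  have hPE : P (Eset X n i m) = F.card * 2⁻¹ ^ (n * m) := by
    rw [hev, hunion, measure_biUnion_finset hdisj (fun f _ => hatom_meas f)]
    rw [Finset.sum_congr rfl (fun f _ => hatom_prob f), Finset.sum_const, nsmul_eq_mul]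
  -- count
  have hcount : F.card = 2 ^ m * (2 ^ m - 1) ^ (n - 1) := by
    rw [hF, ← Fintype.card_subtype]
    exact count_pred i0
  rw [hPE, hcount]
  -- arithmetic
  have hreal : ((2 ^ m * (2 ^ m - 1) ^ (n - 1) : ℕ) : ℝ) * (2 : ℝ)⁻¹ ^ (n * m)
      = (1 - (2 : ℝ)⁻¹ ^ m) ^ (n - 1) := by
    have h1 : ((2 : ℕ) ^ m - 1 : ℕ) = ((2 : ℝ) ^ m - 1 : ℝ) := by
      push_cast [Nat.one_le_two_pow]
      ring
    push_cast [h1]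
    have hnm : n * m = m + m * (n - 1) := by
      have : n = 1 + (n - 1) := by omega
      nlinarith [this]
    rw [hnm, pow_add, pow_mul]
    have h2 : (2 : ℝ) ^ m * (2 : ℝ)⁻¹ ^ m = 1 := by
      rw [← mul_pow]; norm_num
    have h3 : ((2 : ℝ) ^ m - 1) * (2 : ℝ)⁻¹ ^ m = 1 - (2 : ℝ)⁻¹ ^ m := by
      rw [sub_mul, h2, one_mul]
    calc (2 : ℝ) ^ m * ((2 : ℝ) ^ m - 1) ^ (n - 1) * ((2 : ℝ)⁻¹ ^ m * ((2 : ℝ)⁻¹ ^ m) ^ (n - 1))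
        = ((2 : ℝ) ^ m * (2 : ℝ)⁻¹ ^ m) * ((((2 : ℝ) ^ m - 1)) * (2 : ℝ)⁻¹ ^ m) ^ (n - 1) := by
          rw [mul_pow]; ring
      _ = (1 - (2 : ℝ)⁻¹ ^ m) ^ (n - 1) := by rw [h2, h3, one_mul]
  rw [← hreal]
  rw [ENNReal.ofReal_mul (by positivity), ENNReal.ofReal_natCast, ENNReal.ofReal_pow (by norm_num)]
  congr 2
  rw [ENNReal.ofReal_inv_of_pos (by norm_num)]
  norm_num

end Eset


section Depth

variable {Ω : Type*} [MeasurableSpace Ω] {P : Measure Ω} {X : ℕ → Ω → ℕ → Bool}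

lemma Eset_measurable (hX : TrieModel P X) (n i m : ℕ) :
    MeasurableSet (Eset X n i m) := by
  have hm : ∀ j k : ℕ, MeasurableSet {ω | X i ω k ≠ X j ω k} := by
    intro j k
    have : {ω | X i ω k ≠ X j ω k}
        = ({ω | X i ω k = true} ∩ {ω | X j ω k = false})
          ∪ ({ω | X i ω k = false} ∩ {ω | X j ω k = true}) := by
      ext ω
      cases hxi : X i ω k <;> cases hxj : X j ω k <;> simp [hxi, hxj]
    rw [this]
    exact (((bit_measurable hX i k true).inter (bit_measurable hX j k false)).union
      ((bit_measurable hX i k false).inter (bit_measurable hX j k true)))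
  have : Eset X n i m = ⋂ j ∈ (Finset.range n).erase i,
      ⋃ k ∈ Finset.range m, {ω | X i ω k ≠ X j ω k} := by
    ext ω; simp [Eset]
  rw [this]
  exact Finset.measurableSet_biInter _ (fun j _ =>
    Finset.measurableSet_biUnion _ (fun k _ => hm j k))

lemma depth_le_ae (hX : TrieModel P X) {n : ℕ} (hn : 2 ≤ n) {i : ℕ} (hi : i < n) (m : ℕ) :
    {ω | trieDepth (fun k => X k ω) n i ≤ m} =ᵐ[P] Eset X n i m := by
  classical
  set N : Set Ω := ⋃ j ∈ (Finset.range n).erase i, {ω | ∀ k, X i ω k = X j ω k} with hNdef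
  have hN : P N = 0 := by
    refine le_antisymm ?_ zero_le
    refine le_trans (measure_biUnion_finset_le _ _) (le_of_eq ?_)
    rw [Finset.sum_congr rfl
      (fun j hj => agree_null hX (Finset.ne_of_mem_erase hj).symm)]
    simp
  have key : ∀ ω, ω ∉ N →
      (trieDepth (fun k => X k ω) n i ≤ m ↔ ω ∈ Eset X n i m) := by
    intro ω hω
    have hd : trieDepth (fun k => X k ω) n i ≤ m ↔
        (1 ≤ m ∧ ∀ j ∈ (Finset.range n).erase i, lcp (X i ω) (X j ω) < m) := by
      rw [trieDepth]
      constructor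
      · intro h
        refine ⟨by omega, fun j hj => ?_⟩
        have hle : lcp (X i ω) (X j ω)
            ≤ ((Finset.range n).erase i).sup (fun j => lcp (X i ω) (X j ω)) :=
          Finset.le_sup (f := fun j => lcp (X i ω) (X j ω)) hj
        omega
      · rintro ⟨h1, h⟩
        have h2 : ((Finset.range n).erase i).sup (fun j => lcp (X i ω) (X j ω)) ≤ m - 1 := by
          refine Finset.sup_le fun j hj => ?_
          have := h j hj
          omega
        omega
    have hcase : ∀ j ∈ (Finset.range n).erase i,
        (lcp (X i ω) (X j ω) < m ↔ ∃ k < m, X i ω k ≠ X j ω k) := by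
      intro j hj
      have hne : ∃ k, X i ω k ≠ X j ω k := by
        by_contra hc
        push_neg at hc
        exact hω (Set.mem_biUnion hj (by exact hc))
      exact lcp_lt_iff hne
    rw [hd]
    constructor
    · rintro ⟨h1, h⟩ j hj
      exact (hcase j hj).mp (h j hj)
    · intro h
      have hex : ∃ j, j ∈ (Finset.range n).erase i := by
        rcases Nat.eq_zero_or_pos i with hi0 | hi0
        · exact ⟨1, by simp [hi0]; omega⟩
        · exact ⟨0, by simp; omega⟩
      obtain ⟨j0, hj0⟩ := hex
      have h1 : 1 ≤ m := by
        obtain ⟨k, hk, _⟩ := h j0 hj0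
        omega
      exact ⟨h1, fun j hj => (hcase j hj).mpr (h j hj)⟩
  rw [Filter.eventuallyEq_set]
  filter_upwards [measure_eq_zero_iff_ae_notMem.mp hN] with ω hω
  exact key ω hω

lemma meas_depth_le (hX : TrieModel P X) {n : ℕ} (hn : 2 ≤ n) {i : ℕ} (hi : i < n) (m : ℕ) :
    P {ω | trieDepth (fun k => X k ω) n i ≤ m}
      = ENNReal.ofReal ((1 - (2 : ℝ)⁻¹ ^ m) ^ (n - 1)) :=
  (measure_congr (depth_le_ae hX hn hi m)).trans (meas_Eset hX hn hi m)

lemma r_nonneg (j m : ℕ) : 0 ≤ (1 - (2 : ℝ)⁻¹ ^ m) ^ (j - 1) := by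
  have : (2 : ℝ)⁻¹ ^ m ≤ 1 := pow_le_one₀ (by norm_num) (by norm_num)
  exact pow_nonneg (by linarith) _

lemma r_le_one (j m : ℕ) : (1 - (2 : ℝ)⁻¹ ^ m) ^ (j - 1) ≤ 1 := by
  have h1 : (2 : ℝ)⁻¹ ^ m ≤ 1 := pow_le_one₀ (by norm_num) (by norm_num)
  have h2 : (0 : ℝ) ≤ (2 : ℝ)⁻¹ ^ m := by positivity
  exact pow_le_one₀ (by linarith) (by linarith)

lemma r_mono (j : ℕ) {m m' : ℕ} (h : m ≤ m') :
    (1 - (2 : ℝ)⁻¹ ^ m) ^ (j - 1) ≤ (1 - (2 : ℝ)⁻¹ ^ m') ^ (j - 1) := by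
  have h1 : (2 : ℝ)⁻¹ ^ m' ≤ (2 : ℝ)⁻¹ ^ m :=
    pow_le_pow_of_le_one (by norm_num) (by norm_num) h
  have h2 : (2 : ℝ)⁻¹ ^ m ≤ 1 := pow_le_one₀ (by norm_num) (by norm_num)
  exact pow_le_pow_left₀ (by linarith) (by linarith) _

lemma meas_depth_pmf (hX : TrieModel P X) {n : ℕ} (hn : 2 ≤ n) {i : ℕ} (hi : i < n) (m : ℕ) :
    P {ω | trieDepth (fun k => X k ω) n i = m}
      = ENNReal.ofReal ((1 - (2 : ℝ)⁻¹ ^ m) ^ (n - 1))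
        - ENNReal.ofReal ((1 - (2 : ℝ)⁻¹ ^ (m - 1)) ^ (n - 1)) := by
  cases m with
  | zero =>
    have h0 : {ω | trieDepth (fun k => X k ω) n i = 0} = (∅ : Set Ω) := by
      ext ω; simp [trieDepth]
    rw [h0]
    simp
  | succ m =>
    have hset : {ω | trieDepth (fun k => X k ω) n i = m + 1}
        = {ω | trieDepth (fun k => X k ω) n i ≤ m + 1}
          \ {ω | trieDepth (fun k => X k ω) n i ≤ m} := by
      ext ω
      simp only [Set.mem_setOf_eq, Set.mem_diff]
      omega
    have hnm : NullMeasurableSet {ω | trieDepth (fun k => X k ω) n i ≤ m} P :=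
      ((Eset_measurable hX n i m).nullMeasurableSet).congr (depth_le_ae hX hn hi m).symm
    have hsub : {ω | trieDepth (fun k => X k ω) n i ≤ m}
        ⊆ {ω | trieDepth (fun k => X k ω) n i ≤ m + 1} := by
      intro ω hω
      simp only [Set.mem_setOf_eq] at *
      omega
    have := hX.prob
    rw [hset, measure_diff hsub hnm (measure_ne_top P _),
      meas_depth_le hX hn hi, meas_depth_le hX hn hi, Nat.add_sub_cancel]

lemma delta_pmf (hX : TrieModel P X) {δ : ℕ → Ω → ℕ} (hδ : IsTrieDepthRV P X δ)
    {n : ℕ} (hn : 2 ≤ n) (m : ℕ) :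
    P {ω | δ n ω = m}
      = ENNReal.ofReal ((1 - (2 : ℝ)⁻¹ ^ m) ^ (n - 1))
        - ENNReal.ofReal ((1 - (2 : ℝ)⁻¹ ^ (m - 1)) ^ (n - 1)) := by
  rw [hδ.2.2 n hn m]
  rw [Finset.sum_congr rfl
    (fun i hi => meas_depth_pmf hX hn (Finset.mem_range.mp hi) m)]
  rw [Finset.sum_const, Finset.card_range, nsmul_eq_mul, ← mul_assoc,
    ENNReal.inv_mul_cancel (Nat.cast_ne_zero.mpr (by omega)) (ENNReal.natCast_ne_top n),
    one_mul]

lemma delta_pmf_toReal (hX : TrieModel P X) {δ : ℕ → Ω → ℕ} (hδ : IsTrieDepthRV P X δ)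
    {n : ℕ} (hn : 2 ≤ n) (m : ℕ) :
    (P {ω | δ n ω = m}).toReal
      = (1 - (2 : ℝ)⁻¹ ^ m) ^ (n - 1) - (1 - (2 : ℝ)⁻¹ ^ (m - 1)) ^ (n - 1) := by
  rw [delta_pmf hX hδ hn m,
    ENNReal.toReal_sub_of_le (ENNReal.ofReal_le_ofReal (r_mono n (Nat.sub_le m 1)))
      ENNReal.ofReal_ne_top,
    ENNReal.toReal_ofReal (r_nonneg n m), ENNReal.toReal_ofReal (r_nonneg n (m - 1))]

end Depth

section MGF

variable {Ω : Type*} [MeasurableSpace Ω] {P : Measure Ω} {X : ℕ → Ω → ℕ → Bool}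

lemma g_nonneg (t : ℝ) (j m : ℕ) :
    0 ≤ Real.exp (t * m) * (1 - (1 - (2 : ℝ)⁻¹ ^ m) ^ (j - 1)) :=
  mul_nonneg (Real.exp_pos _).le (by linarith [r_le_one j m])

lemma g_le (t : ℝ) (j m : ℕ) :
    Real.exp (t * m) * (1 - (1 - (2 : ℝ)⁻¹ ^ m) ^ (j - 1))
      ≤ (j - 1 : ℕ) * (Real.exp t * 2⁻¹) ^ m := by
  have hb : 1 - (1 - (2 : ℝ)⁻¹ ^ m) ^ (j - 1) ≤ (j - 1 : ℕ) * (2 : ℝ)⁻¹ ^ m := by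
    have h2 : (2 : ℝ)⁻¹ ^ m ≤ 1 := pow_le_one₀ (by norm_num) (by norm_num)
    have h3 : (0 : ℝ) ≤ (2 : ℝ)⁻¹ ^ m := by positivity
    have := one_sub_pow_le' (a := 1 - (2 : ℝ)⁻¹ ^ m) (by linarith) (by linarith) (j - 1)
    calc 1 - (1 - (2 : ℝ)⁻¹ ^ m) ^ (j - 1)
        ≤ (j - 1 : ℕ) * (1 - (1 - (2 : ℝ)⁻¹ ^ m)) := this
      _ = (j - 1 : ℕ) * (2 : ℝ)⁻¹ ^ m := by ring_nf
  have hexp : Real.exp (t * m) = Real.exp t ^ m := by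
    rw [mul_comm, Real.exp_nat_mul]
  calc Real.exp (t * m) * (1 - (1 - (2 : ℝ)⁻¹ ^ m) ^ (j - 1))
      ≤ Real.exp (t * m) * ((j - 1 : ℕ) * (2 : ℝ)⁻¹ ^ m) :=
        mul_le_mul_of_nonneg_left hb (Real.exp_pos _).le
    _ = (j - 1 : ℕ) * (Real.exp t * 2⁻¹) ^ m := by
        rw [hexp, mul_pow]; ring

lemma summable_g {t : ℝ} (ht : t < Real.log 2) (j : ℕ) :
    Summable fun m : ℕ => Real.exp (t * m) * (1 - (1 - (2 : ℝ)⁻¹ ^ m) ^ (j - 1)) := by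
  have hE : Real.exp t < 2 := by
    have := Real.exp_lt_exp.mpr ht
    rwa [Real.exp_log (by norm_num : (0:ℝ) < 2)] at this
  have hlt : Real.exp t * 2⁻¹ < 1 := by
    nlinarith [Real.exp_pos t]
  have hpos : (0 : ℝ) ≤ Real.exp t * 2⁻¹ := by positivity
  exact Summable.of_nonneg_of_le (g_nonneg t j) (g_le t j)
    ((summable_geometric_of_lt_one hpos hlt).mul_left _)

lemma mgf_formula (hX : TrieModel P X) {δ : ℕ → Ω → ℕ} (hδ : IsTrieDepthRV P X δ)
    {t : ℝ} (ht : t < Real.log 2) {j : ℕ} (hj : 1 ≤ j)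
    (hintj : Integrable (fun ω => Real.exp (t * δ j ω)) P) :
    ∫ ω, Real.exp (t * δ j ω) ∂P
      = 1 + (Real.exp t - 1)
          * ∑' m : ℕ, Real.exp (t * m) * (1 - (1 - (2 : ℝ)⁻¹ ^ m) ^ (j - 1)) := by
  have := hX.prob
  rcases eq_or_lt_of_le hj with hj1 | hj2
  · -- j = 1
    subst hj1
    have hzero : (fun m : ℕ => Real.exp (t * m) * (1 - (1 - (2 : ℝ)⁻¹ ^ m) ^ (1 - 1)))
        = fun _ => (0 : ℝ) := by
      funext m; simp
    rw [hzero, tsum_zero, mul_zero, add_zero]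
    have hmeas : MeasurableSet {ω | δ 1 ω = 0} :=
      (hδ.1 1) (measurableSet_singleton 0)
    have hae : ∀ᵐ ω ∂P, δ 1 ω = 0 := by
      rw [ae_iff]
      have : {ω | ¬ δ 1 ω = 0} = {ω | δ 1 ω = 0}ᶜ := rfl
      rw [this, measure_compl hmeas (measure_ne_top _ _), hδ.2.1, measure_univ, tsub_self]
    have : ∫ ω, Real.exp (t * δ 1 ω) ∂P = ∫ _ω, (1 : ℝ) ∂P := by
      refine integral_congr_ae ?_
      filter_upwards [hae] with ω hω
      rw [hω]; simp
    rw [this]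
    simp
  · -- 2 ≤ j
    have hn : 2 ≤ j := hj2
    have hmeas := hδ.1 j
    have hg : Measurable fun m : ℕ => Real.exp (t * m) := measurable_from_nat
    have hint' : Integrable (fun m : ℕ => Real.exp (t * m)) (P.map (δ j)) := by
      rw [integrable_map_measure hg.aestronglyMeasurable hmeas.aemeasurable]
      exact hintj
    have h1 : ∫ ω, Real.exp (t * δ j ω) ∂P = ∫ m, Real.exp (t * m) ∂(P.map (δ j)) :=
      (integral_map hmeas.aemeasurable hg.aestronglyMeasurable).symm
    rw [h1, integral_countable' hint']
    have h2 : ∀ m : ℕ, ((P.map (δ j)) {m}).toReal • Real.exp (t * m)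
        = ((1 - (2 : ℝ)⁻¹ ^ m) ^ (j - 1) - (1 - (2 : ℝ)⁻¹ ^ (m - 1)) ^ (j - 1))
            * Real.exp (t * m) := by
      intro m
      rw [Measure.map_apply hmeas (measurableSet_singleton m)]
      have : δ j ⁻¹' {m} = {ω | δ j ω = m} := by
        ext ω; simp
      rw [this, smul_eq_mul, delta_pmf_toReal hX hδ hn m]
    simp only [measureReal_def]
    rw [tsum_congr h2]
    -- telescoping
    set r : ℕ → ℝ := fun m => (1 - (2 : ℝ)⁻¹ ^ m) ^ (j - 1) with hr
    set g : ℕ → ℝ := fun m => Real.exp (t * m) * (1 - r m) with hgdef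
    have hg : Summable g := summable_g ht j
    set h : ℕ → ℝ := fun m => (r m - r (m - 1)) * Real.exp (t * m) with hhdef
    have key : ∀ m : ℕ, h (m + 1) = Real.exp t * g m - g (m + 1) := by
      intro m
      have he : Real.exp (t * ((m : ℝ) + 1)) = Real.exp (t * m) * Real.exp t := by
        rw [mul_add, mul_one, Real.exp_add]
      simp only [hhdef, hgdef, Nat.add_sub_cancel]
      push_cast
      rw [he]
      ring
    have hsh : Summable (fun m => h (m + 1)) :=
      (((hg.mul_left (Real.exp t)).sub ((summable_nat_add_iff 1).mpr hg)).congr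
        (fun m => (key m).symm))
    have hh : Summable h := (summable_nat_add_iff 1).mp hsh
    have hg0 : g 0 = 1 := by
      have : (1 - (2 : ℝ)⁻¹ ^ (0:ℕ)) ^ (j - 1) = 0 := by
        norm_num
        omega
      simp only [hgdef, hr, Nat.cast_zero, mul_zero, Real.exp_zero, this, sub_zero, one_mul]
    have h0 : h 0 = 0 := by
      simp only [hhdef]
      norm_num
    have hshift : ∑' m : ℕ, g (m + 1) = (∑' m : ℕ, g m) - g 0 := by
      rw [Summable.tsum_eq_zero_add hg]; ring
    calc ∑' m : ℕ, (r m - r (m - 1)) * Real.exp (t * m)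
        = h 0 + ∑' m : ℕ, h (m + 1) := Summable.tsum_eq_zero_add hh
      _ = ∑' m : ℕ, (Real.exp t * g m - g (m + 1)) := by
          rw [h0, zero_add]; exact tsum_congr key
      _ = Real.exp t * ∑' m : ℕ, g m - ∑' m : ℕ, g (m + 1) := by
          rw [Summable.tsum_sub (hg.mul_left _) ((summable_nat_add_iff 1).mpr hg), tsum_mul_left]
      _ = 1 + (Real.exp t - 1) * ∑' m : ℕ, g m := by
          rw [hshift, hg0]; ring

end MGF

section Series

lemma exp_tsum (x : ℝ) : Real.exp x = ∑' n : ℕ, x ^ n / (n.factorial : ℝ) := by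
  rw [Real.exp_eq_exp_ℝ, NormedSpace.exp_eq_tsum_div]

lemma A_succ (z : ℝ) (i : ℕ) :
    ((i + 1 : ℕ) : ℝ) * z ^ (i + 1) / ((i + 1).factorial : ℝ)
      = z * (z ^ i / (i.factorial : ℝ)) := by
  have hfac : ((i + 1).factorial : ℝ) = ((i : ℝ) + 1) * (i.factorial : ℝ) := by
    rw [Nat.factorial_succ]; push_cast; ring
  have h1 : (i.factorial : ℝ) ≠ 0 := Nat.cast_ne_zero.mpr i.factorial_ne_zero
  have h2 : ((i : ℝ) + 1) ≠ 0 := by positivity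
  rw [hfac]
  push_cast
  field_simp
  ring

lemma summable_A (z : ℝ) : Summable (fun j : ℕ => (j : ℝ) * z ^ j / (j.factorial : ℝ)) := by
  refine (summable_nat_add_iff 1).mp ?_
  exact (((Real.summable_pow_div_factorial z).mul_left z).congr
    (fun i => (A_succ z i).symm))

lemma tsum_A (z : ℝ) : ∑' j : ℕ, (j : ℝ) * z ^ j / (j.factorial : ℝ) = z * Real.exp z := by
  rw [Summable.tsum_eq_zero_add (summable_A z)]
  simp only [Nat.cast_zero, zero_mul, zero_div, zero_add]
  rw [tsum_congr (fun i => A_succ z i), tsum_mul_left, ← exp_tsum]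

lemma summable_U (z : ℝ) (hz : 0 ≤ z) {a : ℝ} (h0 : 0 ≤ a) (h1 : a ≤ 1) (e : ℕ) :
    Summable (fun j : ℕ => (j : ℝ) * z ^ j / (j.factorial : ℝ) * (1 - a ^ (j - e))) := by
  have hAnn : ∀ j : ℕ, 0 ≤ (j : ℝ) * z ^ j / (j.factorial : ℝ) := by
    intro j; positivity
  refine Summable.of_nonneg_of_le (fun j => ?_) (fun j => ?_) (summable_A z)
  · have := pow_le_one₀ h0 h1 (n := j - e)
    have := pow_nonneg h0 (j - e)
    have := hAnn j
    nlinarith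
  · have hp : 0 ≤ a ^ (j - e) := pow_nonneg h0 _
    nlinarith [hAnn j]

lemma tsum_U (z : ℝ) (hz : 0 ≤ z) {a : ℝ} (h0 : 0 ≤ a) (h1 : a ≤ 1) :
    ∑' j : ℕ, (j : ℝ) * z ^ j / (j.factorial : ℝ) * (1 - a ^ (j - 1))
      = z * Real.exp z - z * Real.exp (a * z) := by
  have hsum := summable_U z hz h0 h1 1
  rw [Summable.tsum_eq_zero_add hsum]
  simp only [Nat.cast_zero, zero_mul, zero_div, zero_add]
  have key : ∀ i : ℕ, ((i + 1 : ℕ) : ℝ) * z ^ (i + 1) / ((i + 1).factorial : ℝ)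
      * (1 - a ^ (i + 1 - 1))
      = z * (z ^ i / (i.factorial : ℝ)) - z * ((a * z) ^ i / (i.factorial : ℝ)) := by
    intro i
    rw [A_succ z i, Nat.add_sub_cancel, mul_pow]
    have h1 : (i.factorial : ℝ) ≠ 0 := Nat.cast_ne_zero.mpr i.factorial_ne_zero
    field_simp
  rw [tsum_congr key,
    Summable.tsum_sub ((Real.summable_pow_div_factorial z).mul_left z)
      ((Real.summable_pow_div_factorial (a * z)).mul_left z),
    tsum_mul_left, tsum_mul_left, ← exp_tsum, ← exp_tsum]

end Series

/-- For `t < ln 2` at which all `E[e^{tδ_j}]` are finite, and every `z ≥ 0`: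
`e^{−z} Ψ(t,z) − z = −(1 − e^t) z ∑_{k≥0} e^{tk} (1 − e^{−z/2^k})`, where
`Ψ(t,z) = ∑_{j≥1} j E[e^{tδ_j}] z^j / j!`, the series on the right converging
absolutely. -/
theorem trie_depth_poissonized_closed_form {Ω : Type*} [MeasurableSpace Ω]
    (P : Measure Ω) (X : ℕ → Ω → ℕ → Bool) (δ : ℕ → Ω → ℕ)
    (hX : TrieModel P X) (hδ : IsTrieDepthRV P X δ)
    (t : ℝ) (ht : t < Real.log 2)
    (hint : ∀ j : ℕ, 1 ≤ j → Integrable (fun ω => Real.exp (t * δ j ω)) P)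
    (z : ℝ) (hz : 0 ≤ z) :
    Summable (fun k : ℕ => Real.exp (t * k) * (1 - Real.exp (-z / 2 ^ k))) ∧
    Real.exp (-z) *
          (∑' j : ℕ,
            (j : ℝ) * (∫ ω, Real.exp (t * δ j ω) ∂P) * z ^ j / (j.factorial : ℝ)) -
        z =
      -(1 - Real.exp t) * z *
        ∑' k : ℕ, Real.exp (t * k) * (1 - Real.exp (-z / 2 ^ k)) := by
  classical
  have hE : Real.exp t < 2 := by
    have := Real.exp_lt_exp.mpr ht
    rwa [Real.exp_log (by norm_num : (0:ℝ) < 2)] at this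
  have hgeom0 : (0:ℝ) ≤ Real.exp t * 2⁻¹ := by positivity
  have hgeom1 : Real.exp t * 2⁻¹ < 1 := by nlinarith [Real.exp_pos t]
  -- the right-hand series is summable
  have hKnonneg : ∀ k : ℕ, 0 ≤ Real.exp (t * k) * (1 - Real.exp (-z / 2 ^ k)) := by
    intro k
    have h2k : (0:ℝ) < 2 ^ k := by positivity
    have hle : Real.exp (-z / 2 ^ k) ≤ 1 := by
      rw [Real.exp_le_one_iff]
      exact div_nonpos_of_nonpos_of_nonneg (by linarith) h2k.le
    have := Real.exp_pos (t * k)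
    nlinarith
  have hKle : ∀ k : ℕ, Real.exp (t * k) * (1 - Real.exp (-z / 2 ^ k))
      ≤ z * (Real.exp t * 2⁻¹) ^ k := by
    intro k
    have h2k : (0:ℝ) < 2 ^ k := by positivity
    have hb : 1 - Real.exp (-z / 2 ^ k) ≤ z / 2 ^ k := by
      have := Real.add_one_le_exp (-z / 2 ^ k)
      have hdiv : -z / 2 ^ k = -(z / 2 ^ k) := by ring
      rw [hdiv] at this ⊢
      linarith
    have hexp : Real.exp (t * k) = Real.exp t ^ k := by
      rw [mul_comm, Real.exp_nat_mul]
    calc Real.exp (t * k) * (1 - Real.exp (-z / 2 ^ k))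
        ≤ Real.exp (t * k) * (z / 2 ^ k) :=
          mul_le_mul_of_nonneg_left hb (Real.exp_pos _).le
      _ = z * (Real.exp t * 2⁻¹) ^ k := by
          rw [hexp, mul_pow, div_eq_mul_inv, ← inv_pow]; ring
  have hK : Summable (fun k : ℕ => Real.exp (t * k) * (1 - Real.exp (-z / 2 ^ k))) :=
    Summable.of_nonneg_of_le hKnonneg hKle
      ((summable_geometric_of_lt_one hgeom0 hgeom1).mul_left z)
  refine ⟨hK, ?_⟩
  -- notation
  set c : ℝ := Real.exp t - 1 with hc
  set K : ℝ := ∑' k : ℕ, Real.exp (t * k) * (1 - Real.exp (-z / 2 ^ k)) with hKdef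
  set A : ℕ → ℝ := fun j => (j : ℝ) * z ^ j / (j.factorial : ℝ) with hA
  set S : ℕ → ℝ := fun j =>
    ∑' m : ℕ, Real.exp (t * m) * (1 - (1 - (2 : ℝ)⁻¹ ^ m) ^ (j - 1)) with hS
  have hAnn : ∀ j, 0 ≤ A j := by intro j; simp only [hA]; positivity
  -- rewrite each term of Ψ
  have hterm : ∀ j : ℕ,
      (j : ℝ) * (∫ ω, Real.exp (t * δ j ω) ∂P) * z ^ j / (j.factorial : ℝ)
        = A j + c * (A j * S j) := by
    intro j
    rcases Nat.eq_zero_or_pos j with hj0 | hj1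
    · subst hj0
      simp [hA]
    · rw [mgf_formula hX hδ ht hj1 (hint j hj1)]
      simp only [hA, hS, hc]
      ring
  -- the double family
  set F : ℕ × ℕ → ℝ := fun p =>
    A p.2 * (Real.exp (t * p.1) * (1 - (1 - (2 : ℝ)⁻¹ ^ p.1) ^ (p.2 - 1))) with hF
  have hFnn : ∀ p, 0 ≤ F p := fun p => mul_nonneg (hAnn p.2) (g_nonneg t p.2 p.1)
  have ha0 : ∀ m : ℕ, (0:ℝ) ≤ 1 - (2 : ℝ)⁻¹ ^ m := by
    intro m
    have : (2 : ℝ)⁻¹ ^ m ≤ 1 := pow_le_one₀ (by norm_num) (by norm_num)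
    linarith
  have ha1 : ∀ m : ℕ, (1 - (2 : ℝ)⁻¹ ^ m) ≤ 1 := by
    intro m
    have : (0:ℝ) ≤ (2 : ℝ)⁻¹ ^ m := by positivity
    linarith
  have hinner : ∀ m : ℕ, Summable fun j => F (m, j) := by
    intro m
    have heq : (fun j => F (m, j))
        = fun j : ℕ => Real.exp (t * m)
            * ((j : ℝ) * z ^ j / (j.factorial : ℝ) * (1 - (1 - (2 : ℝ)⁻¹ ^ m) ^ (j - 1))) := by
      funext j; simp only [hF, hA]; ring
    rw [heq]
    exact (summable_U z hz (ha0 m) (ha1 m) 1).mul_left _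
  have hinner_val : ∀ m : ℕ,
      (∑' j : ℕ, F (m, j))
        = (z * Real.exp z) * (Real.exp (t * m) * (1 - Real.exp (-z / 2 ^ m))) := by
    intro m
    have heq : (fun j => F (m, j))
        = fun j : ℕ => Real.exp (t * m)
            * ((j : ℝ) * z ^ j / (j.factorial : ℝ) * (1 - (1 - (2 : ℝ)⁻¹ ^ m) ^ (j - 1))) := by
      funext j; simp only [hF, hA]; ring
    rw [heq, tsum_mul_left, tsum_U z hz (ha0 m) (ha1 m)]
    have hax : (1 - (2 : ℝ)⁻¹ ^ m) * z = z - z * (2:ℝ)⁻¹ ^ m := by ring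
    have hdz : -z / 2 ^ m = -(z * (2:ℝ)⁻¹ ^ m) := by
      rw [div_eq_mul_inv, ← inv_pow]; ring
    rw [hax, Real.exp_sub, hdz, Real.exp_neg]
    have h2 : Real.exp (z * (2:ℝ)⁻¹ ^ m) ≠ 0 := Real.exp_ne_zero _
    field_simp
  have houter : Summable fun m : ℕ => ∑' j : ℕ, F (m, j) := by
    refine (hK.mul_left (z * Real.exp z)).congr (fun m => ?_)
    rw [hinner_val m]
  have HF : Summable F := (summable_prod_of_nonneg hFnn).mpr ⟨hinner, houter⟩
  have hG : Summable (fun p : ℕ × ℕ => F (p.2, p.1)) :=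
    ((Equiv.prodComm ℕ ℕ).summable_iff).mpr HF
  have hGnn : ∀ p : ℕ × ℕ, 0 ≤ F (p.2, p.1) := fun p => hFnn _
  have h1 : ∀ j : ℕ, (∑' m : ℕ, F (m, j)) = A j * S j := by
    intro j
    simp only [hS]
    rw [← tsum_mul_left]
  have hASsum : Summable (fun j : ℕ => A j * S j) :=
    ((summable_prod_of_nonneg hGnn).mp hG).2.congr h1
  have hASval : ∑' j : ℕ, A j * S j = (z * Real.exp z) * K := by
    rw [tsum_congr (fun j => (h1 j).symm)]
    have h2 : ∑' (j : ℕ) (m : ℕ), F (m, j) = ∑' p : ℕ × ℕ, F (p.2, p.1) :=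
      (Summable.tsum_prod' hG (fun j => ((summable_prod_of_nonneg hGnn).mp hG).1 j)).symm
    rw [h2]
    have h3 : ∑' p : ℕ × ℕ, F (p.2, p.1) = ∑' p : ℕ × ℕ, F p :=
      (Equiv.prodComm ℕ ℕ).tsum_eq F
    rw [h3, Summable.tsum_prod' HF hinner, tsum_congr hinner_val, tsum_mul_left]
  -- assemble
  have hΨ : (∑' j : ℕ,
      (j : ℝ) * (∫ ω, Real.exp (t * δ j ω) ∂P) * z ^ j / (j.factorial : ℝ))
      = z * Real.exp z + c * ((z * Real.exp z) * K) := by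
    rw [tsum_congr hterm, Summable.tsum_add (summable_A z) (hASsum.mul_left c),
      tsum_mul_left, hASval]
    congr 1
    exact tsum_A z
  rw [hΨ]
  have hez : Real.exp (-z) * Real.exp z = 1 := by
    rw [← Real.exp_add]; simp
  calc Real.exp (-z) * (z * Real.exp z + c * (z * Real.exp z * K)) - z
      = (Real.exp (-z) * Real.exp z) * (z + c * z * K) - z := by ring
    _ = -(1 - Real.exp t) * z * K := by rw [hez, hc]; ring
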